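/- (Slab estimate.) Let n ≥ 2, α > 0 and q < α/(n+α). Then the (n−1)-dimensional integral C := ∫_{ℝ^{n−1}} max(1 − (q/α)|y|^α, 0)^{1/q − n/α − 1} dy (with integrand exp(−|y|^α/α) when q = 0) is finite, and for every unit vector v ∈ ℝⁿ and every h > 0, the slab W = {x ∈ ℝⁿ : |⟨x,v⟩| ≤ h} satisfies G_{α,q}(W) ≤ 2·C·h / Z(α,q). In particular, G_{α,q}(W) → 0 as h → 0⁺. -/

import Mathlib

open MeasureTheory Real Filter
open scoped Pointwise RealInnerProductSpace

/-- The (unnormalized) radial profile of the generalized Gaussian density in dimension `n`: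
`r ↦ max(1 − (q/α) r^α, 0)^(1/q − n/α − 1)` for `q ≠ 0` and `r ↦ exp(−r^α/α)` for `q = 0`. -/
noncomputable def gProfile (n : ℕ) (α q r : ℝ) : ℝ :=
  if q = 0 then Real.exp (-(r ^ α) / α)
  else (max (1 - q / α * r ^ α) 0) ^ (1 / q - (n : ℝ) / α - 1)

/-- The partition function `Z(α,q)`, i.e. the normalizing constant making the generalized
Gaussian density a probability density. -/
noncomputable def Zconst (n : ℕ) (α q : ℝ) : ℝ :=
  ∫ x : EuclideanSpace ℝ (Fin n), gProfile n α q ‖x‖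

/-- The generalized Gaussian density `g_{α,q}` on `ℝⁿ`. -/
noncomputable def gGauss (n : ℕ) (α q : ℝ) (x : EuclideanSpace ℝ (Fin n)) : ℝ :=
  (Zconst n α q)⁻¹ * gProfile n α q ‖x‖

/-- The generalized Gaussian volume `G_{α,q}(K) = ∫_K g_{α,q}(x) dx`. -/
noncomputable def Ggen (n : ℕ) (α q : ℝ) (K : Set (EuclideanSpace ℝ (Fin n))) : ℝ :=
  ∫ x in K, gGauss n α q x

section Aux

lemma gProfile_nonneg (n : ℕ) (α q r : ℝ) : 0 ≤ gProfile n α q r := by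
  unfold gProfile
  split_ifs
  · exact (Real.exp_pos _).le
  · exact Real.rpow_nonneg (le_max_right _ _) _

lemma measurable_gProfile (n : ℕ) (α q : ℝ) : Measurable (gProfile n α q) := by
  unfold gProfile
  split_ifs <;> fun_prop

lemma exponent_pos {n : ℕ} {α q : ℝ} (hα : 0 < α) (hq : q < α / ((n : ℝ) + α)) (hq0 : 0 < q) :
    0 < 1 / q - (n : ℝ) / α - 1 := by
  have hna : (0 : ℝ) < (n : ℝ) + α := by positivity
  have hqa : q * ((n : ℝ) + α) < α := (lt_div_iff₀ hna).mp hq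
  have heq : 1 / q - (n : ℝ) / α - 1 = (α - q * ((n : ℝ) + α)) / (q * α) := by
    field_simp
    ring
  rw [heq]
  exact div_pos (by linarith) (by positivity)

lemma exponent_neg {n : ℕ} {α q : ℝ} (hα : 0 < α) (hq0 : q < 0) :
    1 / q - (n : ℝ) / α - 1 < 0 := by
  have h1 : 1 / q < 0 := one_div_neg.mpr hq0
  have h2 : 0 ≤ (n : ℝ) / α := div_nonneg (Nat.cast_nonneg n) hα.le
  linarith

lemma gProfile_anti {n : ℕ} {α q : ℝ} (hα : 0 < α) (hq : q < α / ((n : ℝ) + α)) {r s : ℝ}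
    (hr : 0 ≤ r) (hrs : r ≤ s) : gProfile n α q s ≤ gProfile n α q r := by
  have hrα : r ^ α ≤ s ^ α := Real.rpow_le_rpow hr hrs hα.le
  have hr0 : 0 ≤ r ^ α := Real.rpow_nonneg hr α
  unfold gProfile
  split_ifs with h
  · exact Real.exp_le_exp.mpr ((div_le_div_iff_of_pos_right hα).mpr (neg_le_neg hrα))
  · rcases lt_or_gt_of_ne h with hq0 | hq0
    · have hqα : q / α < 0 := div_neg_of_neg_of_pos hq0 hα
      have hbr : (1 : ℝ) ≤ 1 - q / α * r ^ α := by nlinarith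
      have hbs : 1 - q / α * r ^ α ≤ 1 - q / α * s ^ α := by nlinarith
      rw [max_eq_left (by linarith), max_eq_left (by linarith)]
      exact Real.rpow_le_rpow_of_nonpos (by linarith) hbs (exponent_neg hα hq0).le
    · have hqα : 0 ≤ q / α := div_nonneg hq0.le hα.le
      refine Real.rpow_le_rpow (le_max_right _ _)
        (max_le_max ?_ le_rfl) (exponent_pos hα hq hq0).le
      nlinarith

lemma integrable_one_add_mul_rpow (m : ℕ) {α c e : ℝ} (hα : 0 < α) (hc : 0 < c)
    (he : (m : ℝ) < α * (-e)) :
    Integrable (fun y : EuclideanSpace ℝ (Fin m) => (1 + c * ‖y‖ ^ α) ^ e) := by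
  have hm0 : (0 : ℝ) ≤ (m : ℝ) := Nat.cast_nonneg m
  have he0 : e < 0 := by nlinarith
  set K : ℝ := (2 ^ α * max 1 c⁻¹) ^ (-e) with hK
  have hBK : (0 : ℝ) < 2 ^ α * max 1 c⁻¹ := by
    have : (1:ℝ) ≤ max 1 c⁻¹ := le_max_left _ _
    have : (0:ℝ) < (2:ℝ) ^ α := Real.rpow_pos_of_pos two_pos α
    nlinarith
  have hKpos : 0 < K := Real.rpow_pos_of_pos hBK _
  have hfin : (Module.finrank ℝ (EuclideanSpace ℝ (Fin m)) : ℝ) < α * (-e) := by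
    rwa [finrank_euclideanSpace_fin]
  have hint : Integrable (fun y : EuclideanSpace ℝ (Fin m) => K * (1 + ‖y‖) ^ (-(α * (-e)))) :=
    (integrable_one_add_norm hfin).const_mul K
  refine hint.mono' ?_ (Filter.Eventually.of_forall fun y => ?_)
  · apply Measurable.aestronglyMeasurable
    fun_prop
  · set r := ‖y‖ with hrdef
    have hr0 : 0 ≤ r := norm_nonneg y
    have h1 : (0:ℝ) < 1 + c * r ^ α := by positivity
    have h2 : (0:ℝ) < 1 + r := by positivity
    have step0 : 1 + r ≤ 2 * max 1 r := by
      rcases le_total r 1 with hcase | hcase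
      · rw [max_eq_left hcase]; linarith
      · rw [max_eq_right hcase]; linarith
    have step1 : (max 1 r) ^ α ≤ max 1 (r ^ α) := by
      rcases le_total r 1 with hcase | hcase
      · rw [max_eq_left hcase, Real.one_rpow]; exact le_max_left _ _
      · rw [max_eq_right hcase]; exact le_max_right _ _
    have step2 : max 1 (r ^ α) ≤ max 1 c⁻¹ * (1 + c * r ^ α) := by
      have hxα : (0:ℝ) ≤ r ^ α := Real.rpow_nonneg hr0 α
      have hm1 : (1:ℝ) ≤ max 1 c⁻¹ := le_max_left _ _
      refine max_le ?_ ?_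
      · nlinarith
      · have hc' : (0:ℝ) < c⁻¹ := inv_pos.mpr hc
        have h5 : r ^ α = c⁻¹ * (c * r ^ α) := by field_simp
        have h6 : c⁻¹ * (c * r ^ α) ≤ c⁻¹ * (1 + c * r ^ α) := by nlinarith
        have h7 : c⁻¹ * (1 + c * r ^ α) ≤ max 1 c⁻¹ * (1 + c * r ^ α) :=
          mul_le_mul_of_nonneg_right (le_max_right _ _) h1.le
        linarith [h5 ▸ le_refl (r ^ α)]
    have key : (1 + r) ^ α ≤ 2 ^ α * max 1 c⁻¹ * (1 + c * r ^ α) := by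
      calc (1 + r) ^ α ≤ (2 * max 1 r) ^ α := Real.rpow_le_rpow (by linarith) step0 hα.le
        _ = 2 ^ α * (max 1 r) ^ α := Real.mul_rpow (by norm_num) (by positivity)
        _ ≤ 2 ^ α * max 1 (r ^ α) :=
            mul_le_mul_of_nonneg_left step1 (Real.rpow_nonneg (by norm_num) α)
        _ ≤ 2 ^ α * (max 1 c⁻¹ * (1 + c * r ^ α)) :=
            mul_le_mul_of_nonneg_left step2 (Real.rpow_nonneg (by norm_num) α)
        _ = 2 ^ α * max 1 c⁻¹ * (1 + c * r ^ α) := (mul_assoc _ _ _).symm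
    have keyP : (1 + r) ^ (α * (-e)) ≤ K * (1 + c * r ^ α) ^ (-e) := by
      have h9 := Real.rpow_le_rpow (by positivity) key (neg_nonneg.mpr he0.le)
      rwa [Real.mul_rpow hBK.le h1.le, ← Real.rpow_mul h2.le] at h9
    set A := (1 + r) ^ (α * (-e)) with hA
    set B := (1 + c * r ^ α) ^ (-e) with hB
    have hApos : 0 < A := Real.rpow_pos_of_pos h2 _
    have hBpos : 0 < B := Real.rpow_pos_of_pos h1 _
    have hfinal : B⁻¹ ≤ K * A⁻¹ := by
      have h3 : (0:ℝ) ≤ A⁻¹ * B⁻¹ := by positivity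
      calc B⁻¹ = A⁻¹ * B⁻¹ * A := by
            rw [show A⁻¹ * B⁻¹ * A = A⁻¹ * A * B⁻¹ by ring, inv_mul_cancel₀ hApos.ne', one_mul]
        _ ≤ A⁻¹ * B⁻¹ * (K * B) := mul_le_mul_of_nonneg_left keyP h3
        _ = K * A⁻¹ * (B⁻¹ * B) := by ring
        _ = K * A⁻¹ := by rw [inv_mul_cancel₀ hBpos.ne', mul_one]
    have hfy : (1 + c * r ^ α) ^ e = B⁻¹ := by
      rw [hB, ← Real.rpow_neg h1.le, neg_neg]
    have hgy : (1 + r) ^ (-(α * (-e))) = A⁻¹ := by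
      rw [hA, ← Real.rpow_neg h2.le]
    rw [Real.norm_eq_abs, abs_of_nonneg (Real.rpow_nonneg h1.le e), hfy, hgy]
    exact hfinal

lemma integrable_gProfile {n m : ℕ} {α q : ℝ} (hα : 0 < α) (hq : q < α / ((n : ℝ) + α))
    (hmn : m ≤ n) :
    Integrable (fun y : EuclideanSpace ℝ (Fin m) => gProfile n α q ‖y‖) := by
  have hmn' : (m : ℝ) ≤ (n : ℝ) := Nat.cast_le.mpr hmn
  rcases lt_trichotomy q 0 with hq0 | rfl | hq0
  · -- q < 0
    set c : ℝ := -(q / α) with hc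
    have hcpos : 0 < c := by
      rw [hc]
      have : q / α < 0 := div_neg_of_neg_of_pos hq0 hα
      linarith
    have hfun : (fun y : EuclideanSpace ℝ (Fin m) => gProfile n α q ‖y‖)
        = fun y => (1 + c * ‖y‖ ^ α) ^ (1 / q - (n : ℝ) / α - 1) := by
      funext y
      unfold gProfile
      rw [if_neg hq0.ne]
      have hxα : (0:ℝ) ≤ ‖y‖ ^ α := Real.rpow_nonneg (norm_nonneg y) α
      have : 1 - q / α * ‖y‖ ^ α = 1 + c * ‖y‖ ^ α := by rw [hc]; ring
      rw [this, max_eq_left (by nlinarith)]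
    rw [hfun]
    apply integrable_one_add_mul_rpow m hα hcpos
    have hαn : α * ((n : ℝ) / α) = (n : ℝ) := mul_div_cancel₀ _ hα.ne'
    have h1q : 1 / q < 0 := one_div_neg.mpr hq0
    have heq : α * (-(1 / q - (n : ℝ) / α - 1)) = -(α * (1 / q)) + α * ((n : ℝ) / α) + α := by
      ring
    rw [heq, hαn]
    have : α * (1 / q) < 0 := mul_neg_of_pos_of_neg hα h1q
    linarith
  · -- q = 0
    have hn1 : (0:ℝ) < (n : ℝ) + 1 := by positivity
    set M : ℝ := ((n : ℝ) + 1) / α with hM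
    have hMpos : 0 < M := by positivity
    have hcond : (m : ℝ) < α * (-(-M)) := by
      rw [neg_neg, hM, mul_div_cancel₀ _ hα.ne']
      linarith
    refine (integrable_one_add_mul_rpow m (c := ((n:ℝ)+1)⁻¹) (e := -M) hα (by positivity)
      hcond).mono' ((measurable_gProfile n α 0).comp measurable_norm).aestronglyMeasurable
      (Filter.Eventually.of_forall fun y => ?_)
    set x : ℝ := ‖y‖ ^ α with hx
    have hx0 : 0 ≤ x := Real.rpow_nonneg (norm_nonneg y) α
    have hb : (0:ℝ) < 1 + x / ((n:ℝ) + 1) := by positivity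
    have h1 : 1 + x / ((n:ℝ)+1) ≤ Real.exp (x / ((n:ℝ)+1)) := by
      have := Real.add_one_le_exp (x / ((n:ℝ)+1))
      linarith
    have h2 : (1 + x / ((n:ℝ)+1)) ^ M ≤ Real.exp (x / α) := by
      calc (1 + x / ((n:ℝ)+1)) ^ M ≤ (Real.exp (x / ((n:ℝ)+1))) ^ M :=
            Real.rpow_le_rpow hb.le h1 hMpos.le
        _ = Real.exp (x / ((n:ℝ)+1) * M) := (Real.exp_mul _ M).symm
        _ = Real.exp (x / α) := by
            congr 1
            rw [hM]
            field_simp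
    have h3 : Real.exp (-(x / α)) ≤ (1 + x / ((n:ℝ)+1)) ^ (-M) := by
      rw [Real.exp_neg, Real.rpow_neg hb.le]
      exact inv_anti₀ (Real.rpow_pos_of_pos hb M) h2
    have hgp : gProfile n α 0 ‖y‖ = Real.exp (-(x / α)) := by
      unfold gProfile
      rw [if_pos rfl, ← hx, neg_div]
    rw [Real.norm_eq_abs, abs_of_nonneg (gProfile_nonneg n α 0 ‖y‖), hgp]
    calc Real.exp (-(x / α)) ≤ (1 + x / ((n:ℝ)+1)) ^ (-M) := h3
      _ = (1 + ((n:ℝ)+1)⁻¹ * ‖y‖ ^ α) ^ (-M) := by rw [hx]; ring_nf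
  · -- q > 0
    have he : 0 < 1 / q - (n : ℝ) / α - 1 := exponent_pos hα hq hq0
    have hcont : Continuous (fun y : EuclideanSpace ℝ (Fin m) => gProfile n α q ‖y‖) := by
      have hbase : Continuous fun y : EuclideanSpace ℝ (Fin m) =>
          max (1 - q / α * ‖y‖ ^ α) 0 := by
        apply Continuous.max _ continuous_const
        apply Continuous.sub continuous_const
        apply Continuous.mul continuous_const
        rw [continuous_iff_continuousAt]
        exact fun y => (Real.continuousAt_rpow_const _ _ (Or.inr hα.le)).comp
          continuous_norm.continuousAt
      have : Continuous fun y : EuclideanSpace ℝ (Fin m) =>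
          (max (1 - q / α * ‖y‖ ^ α) 0) ^ (1 / q - (n : ℝ) / α - 1) := by
        rw [continuous_iff_continuousAt]
        exact fun y => (Real.continuousAt_rpow_const _ _ (Or.inr he.le)).comp hbase.continuousAt
      convert this using 1
      funext y
      unfold gProfile
      rw [if_neg hq0.ne']
    apply hcont.integrable_of_hasCompactSupport
    apply HasCompactSupport.intro (isCompact_closedBall (0 : EuclideanSpace ℝ (Fin m))
      ((α / q) ^ (1/α)))
    intro y hy
    have hRnn : (0:ℝ) ≤ (α / q) ^ (1/α) := Real.rpow_nonneg (by positivity) _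
    have hy' : (α / q) ^ (1/α) < ‖y‖ := by
      simpa [Metric.mem_closedBall, dist_eq_norm, not_le] using hy
    have hRα : ((α / q) ^ (1/α)) ^ α = α / q := by
      rw [one_div, Real.rpow_inv_rpow (by positivity) hα.ne']
    have hyα : α / q < ‖y‖ ^ α := by
      calc α / q = ((α / q) ^ (1/α)) ^ α := hRα.symm
        _ < ‖y‖ ^ α := Real.rpow_lt_rpow hRnn hy' hα
    have hneg : 1 - q / α * ‖y‖ ^ α < 0 := by
      have hqa : 0 < q / α := div_pos hq0 hα
      have : q / α * (α / q) = 1 := by field_simp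
      nlinarith
    unfold gProfile
    rw [if_neg hq0.ne', max_eq_right hneg.le, Real.zero_rpow he.ne']

end Aux

/-- Slab estimate. For `α > 0` and `q < α/(n+α)`, the `(n−1)`-dimensional
integral `C = ∫_{ℝ^{n−1}} gProfile n α q ‖y‖ dy` is finite, and every slab
`W = {x : |⟨x,v⟫| ≤ h}` satisfies `G_{α,q}(W) ≤ 2 C h / Z(α,q)`; in particular
`G_{α,q}(W) → 0` as `h → 0⁺`. -/
theorem generalized_gaussian_slab_estimate
    (n : ℕ) (hn : 2 ≤ n) (α q : ℝ) (hα : 0 < α) (hq : q < α / ((n : ℝ) + α)) :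
    MeasureTheory.Integrable
      (fun y : EuclideanSpace ℝ (Fin (n - 1)) => gProfile n α q ‖y‖) ∧
    ∀ v : EuclideanSpace ℝ (Fin n), ‖v‖ = 1 →
      (∀ h : ℝ, 0 < h →
        Ggen n α q {x : EuclideanSpace ℝ (Fin n) | |⟪x, v⟫| ≤ h}
          ≤ 2 * (∫ y : EuclideanSpace ℝ (Fin (n - 1)), gProfile n α q ‖y‖) * h
              / Zconst n α q) ∧
      Filter.Tendsto
        (fun h : ℝ => Ggen n α q {x : EuclideanSpace ℝ (Fin n) | |⟪x, v⟫| ≤ h})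
        (nhdsWithin 0 (Set.Ioi 0)) (nhds 0) := by
  obtain ⟨m, rfl⟩ : ∃ m, n = m + 1 := ⟨n - 1, by omega⟩
  have hInt : Integrable (fun y : EuclideanSpace ℝ (Fin ((m + 1) - 1)) =>
      gProfile (m + 1) α q ‖y‖) := integrable_gProfile hα hq (by omega)
  refine ⟨hInt, fun v hv => ?_⟩
  set C : ℝ := ∫ y : EuclideanSpace ℝ (Fin ((m + 1) - 1)), gProfile (m + 1) α q ‖y‖ with hCdef
  have hC0 : 0 ≤ C := integral_nonneg fun y => gProfile_nonneg _ _ _ _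
  have hZ0 : 0 ≤ Zconst (m + 1) α q := integral_nonneg fun x => gProfile_nonneg _ _ _ _
  -- orthonormal basis with b 0 = v
  obtain ⟨b, hb0⟩ : ∃ b : OrthonormalBasis (Fin (m + 1)) ℝ (EuclideanSpace ℝ (Fin (m + 1))),
      b 0 = v := by
    have hcard : Module.finrank ℝ (EuclideanSpace ℝ (Fin (m + 1))) = Fintype.card (Fin (m + 1)) := by
      rw [finrank_euclideanSpace_fin, Fintype.card_fin]
    have horth : Orthonormal ℝ (({0} : Set (Fin (m + 1))).restrict (fun _ => v)) := by
      constructor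
      · intro i; exact hv
      · intro i j hij
        exfalso
        apply hij
        have hi : (i : Fin (m + 1)) = 0 := i.2
        have hj : (j : Fin (m + 1)) = 0 := j.2
        exact Subtype.ext (hi.trans hj.symm)
    obtain ⟨b, hb⟩ := Orthonormal.exists_orthonormalBasis_extension_of_card_eq hcard horth
    exact ⟨b, hb 0 rfl⟩
  -- the measurable equivalence
  set Ψ : EuclideanSpace ℝ (Fin (m + 1)) ≃ᵐ ℝ × (Fin m → ℝ) :=
    (b.measurableEquiv.trans ((MeasurableEquiv.toLp 2 (Fin (m + 1) → ℝ)).symm)).trans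
      (MeasurableEquiv.piFinSuccAbove (fun _ => ℝ) 0) with hΨdef
  have hΨ : MeasurePreserving Ψ volume volume := by
    have T1 := b.measurePreserving_measurableEquiv
    have T2 := EuclideanSpace.volume_preserving_symm_measurableEquiv_toLp (Fin (m + 1))
    have T3' : MeasurePreserving (MeasurableEquiv.piFinSuccAbove (fun _ : Fin (m + 1) => ℝ) 0)
        volume volume := by
      simp only [MeasureTheory.volume_pi, MeasureTheory.Measure.volume_eq_prod]
      exact measurePreserving_piFinSuccAbove (fun _ : Fin (m + 1) => (volume : Measure ℝ)) 0
    exact T3'.comp (T2.comp T1)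
  -- first coordinate of Ψ
  have hΨfst : ∀ x : EuclideanSpace ℝ (Fin (m + 1)), (Ψ x).1 = ⟪x, v⟫ := by
    intro x
    have : (Ψ x).1 = b.repr x 0 := rfl
    rw [this, b.repr_apply_apply, hb0, real_inner_comm]
  -- norm of Ψ.symm
  have hΨnorm : ∀ p : ℝ × (Fin m → ℝ),
      ‖((MeasurableEquiv.toLp 2 (Fin m → ℝ)).symm).symm p.2‖ ≤ ‖Ψ.symm p‖ := by
    rintro ⟨t, y⟩
    have h0 : (MeasurableEquiv.piFinSuccAbove (fun _ : Fin (m + 1) => ℝ) 0).symm (t, y)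
        = Fin.cons t y := by
      simp only [MeasurableEquiv.piFinSuccAbove_symm_apply, Fin.insertNthEquiv_zero]
      rfl
    have hw : Ψ.symm (t, y) = b.measurableEquiv.symm
        (((MeasurableEquiv.toLp 2 (Fin (m + 1) → ℝ)).symm).symm (Fin.cons t y)) := by
      show b.measurableEquiv.symm (((MeasurableEquiv.toLp 2 (Fin (m + 1) → ℝ)).symm).symm
        ((MeasurableEquiv.piFinSuccAbove (fun _ : Fin (m + 1) => ℝ) 0).symm (t, y))) = _
      rw [h0]
    rw [hw]
    have h1 : ‖b.measurableEquiv.symm (((MeasurableEquiv.toLp 2 (Fin (m + 1) → ℝ)).symm).symm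
        (Fin.cons t y))‖ = ‖((MeasurableEquiv.toLp 2 (Fin (m + 1) → ℝ)).symm).symm
        (Fin.cons t y)‖ := b.repr.symm.norm_map _
    rw [h1]
    have hcoord : ∀ (k : ℕ) (w : Fin k → ℝ) (i : Fin k),
        (((MeasurableEquiv.toLp 2 (Fin k → ℝ)).symm).symm w) i = w i := fun _ _ _ => rfl
    rw [EuclideanSpace.norm_eq, EuclideanSpace.norm_eq]
    apply Real.sqrt_le_sqrt
    simp_rw [hcoord]
    have hsum := Fin.sum_univ_succ (n := m) (M := ℝ)
      (fun x => ‖Fin.cons (α := fun _ => ℝ) t y x‖ ^ 2)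
    simp only [Fin.cons_zero, Fin.cons_succ] at hsum
    rw [hsum]
    have : (0:ℝ) ≤ ‖t‖ ^ 2 := sq_nonneg _
    linarith
  -- measurability facts
  have hWmeas : ∀ h : ℝ, MeasurableSet {x : EuclideanSpace ℝ (Fin (m + 1)) | |⟪x, v⟫| ≤ h} := by
    intro h
    have : Continuous fun x : EuclideanSpace ℝ (Fin (m + 1)) => |⟪x, v⟫| :=
      (continuous_id.inner continuous_const).abs
    exact (isClosed_le this continuous_const).measurableSet
  have hgmeas : Measurable fun x : EuclideanSpace ℝ (Fin (m + 1)) =>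
      gProfile (m + 1) α q ‖x‖ := (measurable_gProfile _ α q).comp measurable_norm
  -- the key bound
  have key : ∀ h : ℝ, 0 < h →
      Ggen (m + 1) α q {x : EuclideanSpace ℝ (Fin (m + 1)) | |⟪x, v⟫| ≤ h}
        ≤ 2 * C * h / Zconst (m + 1) α q := by
    intro h hh
    set W : Set (EuclideanSpace ℝ (Fin (m + 1))) := {x | |⟪x, v⟫| ≤ h} with hWdef
    have hIW : ∫ x in W, gProfile (m + 1) α q ‖x‖ ≤ 2 * C * h := by
      rw [integral_eq_lintegral_of_nonneg_ae
        (Filter.Eventually.of_forall fun x => gProfile_nonneg _ _ _ _)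
        hgmeas.aestronglyMeasurable]
      apply ENNReal.toReal_le_of_le_ofReal (by positivity)
      -- transport along Ψ
      have hWeq : W = Ψ ⁻¹' {p : ℝ × (Fin m → ℝ) | |p.1| ≤ h} := by
        ext x
        simp only [hWdef, Set.mem_setOf_eq, Set.mem_preimage, hΨfst x]
      rw [hWeq]
      have hgm : Measurable fun p : ℝ × (Fin m → ℝ) =>
          ENNReal.ofReal (gProfile (m + 1) α q ‖Ψ.symm p‖) :=
        ((measurable_gProfile _ α q).comp (measurable_norm.comp
          Ψ.symm.measurable)).ennreal_ofReal
      have hstep : ∫⁻ x in Ψ ⁻¹' {p : ℝ × (Fin m → ℝ) | |p.1| ≤ h},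
          ENNReal.ofReal (gProfile (m + 1) α q ‖x‖)
          = ∫⁻ p in {p : ℝ × (Fin m → ℝ) | |p.1| ≤ h},
          ENNReal.ofReal (gProfile (m + 1) α q ‖Ψ.symm p‖) := by
        rw [← hΨ.setLIntegral_comp_preimage_emb Ψ.measurableEmbedding]
        congr 1
        funext x
        rw [Ψ.symm_apply_apply]
      rw [hstep]
      have hSeq : {p : ℝ × (Fin m → ℝ) | |p.1| ≤ h} = (Set.Icc (-h) h) ×ˢ Set.univ := by
        ext p
        simp [abs_le, Set.mem_prod]
      rw [hSeq, Measure.volume_eq_prod, ← Measure.prod_restrict, Measure.restrict_univ]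
      rw [lintegral_prod _ hgm.aemeasurable]
      have hinner : ∀ t : ℝ, ∫⁻ y : Fin m → ℝ,
          ENNReal.ofReal (gProfile (m + 1) α q ‖Ψ.symm (t, y)‖) ≤ ENNReal.ofReal C := by
        intro t
        have hle : ∀ y : Fin m → ℝ,
            ENNReal.ofReal (gProfile (m + 1) α q ‖Ψ.symm (t, y)‖)
            ≤ ENNReal.ofReal (gProfile (m + 1) α q
                ‖((MeasurableEquiv.toLp 2 (Fin m → ℝ)).symm).symm y‖) := fun y =>
          ENNReal.ofReal_le_ofReal (gProfile_anti hα hq (norm_nonneg _) (hΨnorm (t, y)))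
        calc ∫⁻ y : Fin m → ℝ, ENNReal.ofReal (gProfile (m + 1) α q ‖Ψ.symm (t, y)‖)
            ≤ ∫⁻ y : Fin m → ℝ, ENNReal.ofReal (gProfile (m + 1) α q
                ‖((MeasurableEquiv.toLp 2 (Fin m → ℝ)).symm).symm y‖) := lintegral_mono hle
          _ = ∫⁻ z : EuclideanSpace ℝ (Fin m),
              ENNReal.ofReal (gProfile (m + 1) α q ‖z‖) := by
              have hmeas2 : Measurable fun y : Fin m → ℝ => ENNReal.ofReal
                  (gProfile (m + 1) α q ‖((MeasurableEquiv.toLp 2 (Fin m → ℝ)).symm).symm y‖) :=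
                ((measurable_gProfile _ α q).comp (measurable_norm.comp
                  ((MeasurableEquiv.toLp 2 (Fin m → ℝ)).symm).symm.measurable)).ennreal_ofReal
              have heq := (EuclideanSpace.volume_preserving_symm_measurableEquiv_toLp
                (Fin m)).lintegral_comp hmeas2
              simp only [MeasurableEquiv.symm_apply_apply] at heq
              exact heq.symm
          _ = ENNReal.ofReal C :=
              (ofReal_integral_eq_lintegral_ofReal hInt
                (Filter.Eventually.of_forall fun y => gProfile_nonneg _ _ _ _)).symm
      calc ∫⁻ t in Set.Icc (-h) h, ∫⁻ y : Fin m → ℝ,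
            ENNReal.ofReal (gProfile (m + 1) α q ‖Ψ.symm (t, y)‖)
          ≤ ∫⁻ _ in Set.Icc (-h) h, ENNReal.ofReal C := lintegral_mono fun t => hinner t
        _ = ENNReal.ofReal C * volume (Set.Icc (-h) h) := by
            rw [lintegral_const, Measure.restrict_apply_univ]
        _ = ENNReal.ofReal C * ENNReal.ofReal (2 * h) := by
            rw [Real.volume_Icc]
            congr 1
            ring
        _ = ENNReal.ofReal (C * (2 * h)) := (ENNReal.ofReal_mul hC0).symm
        _ = ENNReal.ofReal (2 * C * h) := by ring_nf
    have hGgen : Ggen (m + 1) α q W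
        = (Zconst (m + 1) α q)⁻¹ * ∫ x in W, gProfile (m + 1) α q ‖x‖ := by
      unfold Ggen gGauss
      rw [integral_const_mul]
    rw [hGgen]
    calc (Zconst (m + 1) α q)⁻¹ * ∫ x in W, gProfile (m + 1) α q ‖x‖
        ≤ (Zconst (m + 1) α q)⁻¹ * (2 * C * h) :=
          mul_le_mul_of_nonneg_left hIW (inv_nonneg.mpr hZ0)
      _ = 2 * C * h / Zconst (m + 1) α q := by rw [div_eq_mul_inv]; ring
  refine ⟨key, ?_⟩
  -- squeeze to zero
  have htend : Tendsto (fun h : ℝ => 2 * C * h / Zconst (m + 1) α q)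
      (nhdsWithin 0 (Set.Ioi 0)) (nhds 0) := by
    have hcont : Continuous fun h : ℝ => 2 * C * h / Zconst (m + 1) α q :=
      (continuous_const.mul continuous_id).div_const _
    have := (hcont.tendsto 0).mono_left (nhdsWithin_le_nhds (s := Set.Ioi (0:ℝ)))
    simpa using this
  have hnonneg : ∀ h : ℝ, 0 < h →
      0 ≤ Ggen (m + 1) α q {x : EuclideanSpace ℝ (Fin (m + 1)) | |⟪x, v⟫| ≤ h} := by
    intro h hh
    apply setIntegral_nonneg (hWmeas h)
    intro x _
    exact mul_nonneg (inv_nonneg.mpr hZ0) (gProfile_nonneg _ _ _ _)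
  refine tendsto_of_tendsto_of_tendsto_of_le_of_le' tendsto_const_nhds htend ?_ ?_
  · filter_upwards [self_mem_nhdsWithin] with h hh
    exact hnonneg h hh
  · filter_upwards [self_mem_nhdsWithin] with h hh
    exact key h hh
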